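/- arXiv:2602.15585 — 3 statements merged into one kernel-verified Lean document; each statement's English description precedes it below -/
import Mathlib

section
/- Let k = k(n) be natural numbers with k/(log n)^2 → ∞ and k/√n → 0, fix γ ∈ ℝ and a constant α > 1, and let m = m(n) satisfy √(log n)·(4·m·(log n)/(k^2·n) − 1) → γ as n → ∞. Then the threshold t* satisfies (t* − μ − k)/σ → γ/√2 as n → ∞. -/
open Filter Finset MeasureTheory

noncomputable section

/-- A graph on `Fin n` is identified with its edge set. -/
abbrev EdgeSet (n : ℕ) := Finset (Sym2 (Fin n))

/-- The non-diagonal (loopless) potential edges on `Fin n`. -/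
def potEdges (n : ℕ) : Finset (Sym2 (Fin n)) :=
  Finset.univ.filter (fun e => ¬ e.IsDiag)

/-- Graphs on `Fin n` with exactly `m` edges. -/
def nullGraphs (n m : ℕ) : Finset (EdgeSet n) :=
  (potEdges n).powersetCard m

/-- `N = n(n-1)/2`, the number of potential edges. -/
def bigN (n : ℕ) : ℕ := n * (n - 1) / 2

open Classical in
/-- Null model `P0 = G(n,m)`: the uniform distribution over graphs with `m` edges. -/
def P0 (n m : ℕ) (A : Set (EdgeSet n)) : ℝ :=
  (((nullGraphs n m).filter (fun G => G ∈ A)).card : ℝ) / ((nullGraphs n m).card : ℝ)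

/-- Potential edges incident to a vertex `v`. -/
def incEdges (n : ℕ) (v : Fin n) : Finset (Sym2 (Fin n)) :=
  (potEdges n).filter (fun e => v ∈ e)

/-- Normalizing constant `n·C(n-1,k)·C(N-k,m-k)` of the planted model. -/
def plantedDenom (n m k : ℕ) : ℝ :=
  (n : ℝ) * (Nat.choose (n - 1) k : ℝ) * (Nat.choose (bigN n - k) (m - k) : ℝ)

open Classical in
/-- Joint planted model over triples (hub `v`, star `S`, graph `S ∪ H`): the hub is
uniform, the star is a uniform `k`-set of edges incident to the hub, and `H` is a
uniform `(m-k)`-set of the remaining potential edges. -/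
def P1full (n m k : ℕ) (A : Set (Fin n × EdgeSet n × EdgeSet n)) : ℝ :=
  (∑ v : Fin n, ∑ S ∈ (incEdges n v).powersetCard k,
      ∑ H ∈ (potEdges n \ S).powersetCard (m - k),
        if (v, S, S ∪ H) ∈ A then (1 : ℝ) else 0) / plantedDenom n m k

/-- Planted model `P1(n,m,k)`: the marginal distribution of the graph. -/
def P1 (n m k : ℕ) (A : Set (EdgeSet n)) : ℝ :=
  P1full n m k {t | t.2.2 ∈ A}

open Classical in
/-- Expectation under the joint planted model. -/
def E1full (n m k : ℕ) (f : Fin n × EdgeSet n × EdgeSet n → ℝ) : ℝ :=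
  (∑ v : Fin n, ∑ S ∈ (incEdges n v).powersetCard k,
      ∑ H ∈ (potEdges n \ S).powersetCard (m - k), f (v, S, S ∪ H)) / plantedDenom n m k

open Classical in
/-- Degree of vertex `v` in the graph `G`. -/
def deg {n : ℕ} (G : EdgeSet n) (v : Fin n) : ℕ :=
  (G.filter (fun e => v ∈ e)).card

/-- Maximum degree of the graph `G`. -/
def maxDeg {n : ℕ} (G : EdgeSet n) : ℕ :=
  Finset.univ.sup (fun v => deg G v)

/-- Likelihood ratio `Λ(G) = [C(N,m)/(n·C(n-1,k)·C(N-k,m-k))]·Σ_i C(d_i,k)`. -/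
def LR (n m k : ℕ) (G : EdgeSet n) : ℝ :=
  ((Nat.choose (bigN n) m : ℝ) / plantedDenom n m k) *
    ∑ i : Fin n, (Nat.choose (deg G i) k : ℝ)

/-- Threshold `t* = 2m/n + √((2m/n)(1-m/N))·√(2 log n - (1/α) log log n)`. -/
def tstar (α : ℝ) (n m : ℕ) : ℝ :=
  2 * (m : ℝ) / (n : ℝ) +
    Real.sqrt (2 * (m : ℝ) / (n : ℝ) * (1 - (m : ℝ) / (bigN n : ℝ))) *
      Real.sqrt (2 * Real.log n - (1 / α) * Real.log (Real.log n))

/-- The standard normal cumulative distribution function `Φ`. -/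
def Phi (x : ℝ) : ℝ :=
  ∫ t in Set.Iic x, Real.exp (-t ^ 2 / 2) / Real.sqrt (2 * Real.pi)

/-- Total variation distance between two set functions on graphs. -/
def TVdist (n : ℕ) (P Q : Set (EdgeSet n) → ℝ) : ℝ :=
  ⨆ A : Set (EdgeSet n), |P A - Q A|

/-- Null mean degree `μ = (n-1)·(m/N)`. -/
def muN (n m : ℕ) : ℝ := ((n : ℝ) - 1) * ((m : ℝ) / (bigN n : ℝ))

/-- Null degree variance `σ² = (n-1)p(1-p)·(N/(N-1))·((N-(n-1))/(N-1))` with `p = m/N`. -/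
def sigSqN (n m : ℕ) : ℝ :=
  ((n : ℝ) - 1) * ((m : ℝ) / (bigN n : ℝ)) * (1 - (m : ℝ) / (bigN n : ℝ)) *
    ((bigN n : ℝ) / ((bigN n : ℝ) - 1)) *
      (((bigN n : ℝ) - ((n : ℝ) - 1)) / ((bigN n : ℝ) - 1))

/-- Null degree standard deviation `σ`. -/
def sigN (n m : ℕ) : ℝ := Real.sqrt (sigSqN n m)

/-- `a_n = kσ/μ`. -/
def aN (n m k : ℕ) : ℝ := (k : ℝ) * sigN n m / muN n m

/-- Hypergeometric(N,K,m) probability mass function. -/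
def hpmf (N K m d : ℕ) : ℝ :=
  ((Nat.choose K d : ℝ) * (Nat.choose (N - K) (m - d) : ℝ)) / (Nat.choose N m : ℝ)

/-- Mean of the Hypergeometric(N,K,m) distribution. -/
def hMean (N K m : ℕ) : ℝ := ∑ d ∈ Finset.range (m + 1), (d : ℝ) * hpmf N K m d

/-- Variance of the Hypergeometric(N,K,m) distribution. -/
def hVar (N K m : ℕ) : ℝ :=
  ∑ d ∈ Finset.range (m + 1), ((d : ℝ) - hMean N K m) ^ 2 * hpmf N K m d

/-- Moment generating function of the standardized hypergeometric `Y = (d-μ)/σ`. -/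
def hMgfY (N K m : ℕ) (t : ℝ) : ℝ :=
  ∑ d ∈ Finset.range (m + 1),
    hpmf N K m d * Real.exp (t * (((d : ℝ) - hMean N K m) / Real.sqrt (hVar N K m)))

/-- Cumulant generating function of the standardized hypergeometric. -/
def hCgfY (N K m : ℕ) (t : ℝ) : ℝ := Real.log (hMgfY N K m t)

open Classical in
/-- The Erdős–Rényi `G(n,p)` probability of an event. -/
def Pgnp (n : ℕ) (p : ℝ) (A : Set (EdgeSet n)) : ℝ :=
  ∑ G ∈ (potEdges n).powerset,
    (if G ∈ A then (1 : ℝ) else 0) * p ^ G.card * (1 - p) ^ ((potEdges n).card - G.card)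

open Classical in
/-- Leaves of the planted star with hub `v` and star edge set `S`. -/
def starLeaves {n : ℕ} (v : Fin n) (S : EdgeSet n) : Finset (Fin n) :=
  Finset.univ.filter (fun u => u ≠ v ∧ s(u, v) ∈ S)

open Classical in
/-- Expectation under the null model `G(n,m)`. -/
def E0 (n m : ℕ) (f : EdgeSet n → ℝ) : ℝ :=
  (∑ G ∈ nullGraphs n m, f G) / ((nullGraphs n m).card : ℝ)

open Classical in
/-- Conditional expectation under the null model `G(n,m)` given an event `A`. -/
def E0cond (n m : ℕ) (f : EdgeSet n → ℝ) (A : Set (EdgeSet n)) : ℝ :=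
  (∑ G ∈ (nullGraphs n m).filter (fun G => G ∈ A), f G) /
    (((nullGraphs n m).filter (fun G => G ∈ A)).card : ℝ)

open Classical in
/-- Tail probability `Q^{(a)}(Y ≥ t)` of the exponentially tilted standardized
hypergeometric distribution. -/
def hTiltTailProb (N K m : ℕ) (a t : ℝ) : ℝ :=
  (∑ d ∈ Finset.range (m + 1),
      (if t ≤ ((d : ℝ) - hMean N K m) / Real.sqrt (hVar N K m) then (1 : ℝ) else 0) *
        (hpmf N K m d *
          Real.exp (a * (((d : ℝ) - hMean N K m) / Real.sqrt (hVar N K m))))) /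
    hMgfY N K m a
/- ===== auxiliary material for the proof of tstar_standardized_limit ===== -/

lemma aux_sqrt_atTop : Tendsto Real.sqrt atTop atTop := by
  refine (tendsto_rpow_atTop (by norm_num : (0:ℝ) < 1/2)).congr fun x => ?_
  rw [Real.sqrt_eq_rpow]

lemma aux_div_sub_one : Tendsto (fun x : ℝ => x / (x - 1)) atTop (nhds 1) := by
  have h : Tendsto (fun x : ℝ => 1 + (x - 1)⁻¹) atTop (nhds (1 + 0)) :=
    tendsto_const_nhds.add
      (tendsto_inv_atTop_zero.comp (tendsto_atTop_add_const_right _ (-1) tendsto_id))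
  rw [add_zero] at h
  refine h.congr' ?_
  filter_upwards [eventually_gt_atTop (1:ℝ)] with x hx
  have hx1 : x - 1 ≠ 0 := by linarith
  field_simp
  ring

lemma aux_log_div_sqrt : Tendsto (fun x : ℝ => Real.log x / Real.sqrt x) atTop (nhds 0) := by
  have h := (isLittleO_log_rpow_atTop (by norm_num : (0:ℝ) < 1/2)).tendsto_div_nhds_zero
  refine h.congr' ?_
  filter_upwards [eventually_ge_atTop (0:ℝ)] with x hx
  rw [Real.sqrt_eq_rpow]

lemma bigN_cast (n : ℕ) : ((bigN n : ℝ)) = (n : ℝ) * ((n : ℝ) - 1) / 2 := by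
  cases n with
  | zero => simp [bigN]
  | succ n =>
    have h2 : 2 ∣ (n + 1) * n := by
      rcases Nat.even_mul_succ_self n with ⟨c, hc⟩
      exact ⟨c, by rw [mul_comm]; omega⟩
    unfold bigN
    simp only [Nat.add_sub_cancel]
    rw [Nat.cast_div h2 (by norm_num)]
    push_cast; ring

/-- `L n = log n`. -/
def auxL (n : ℕ) : ℝ := Real.log n
/-- `p n = m n / N`. -/
def auxp (m : ℕ → ℕ) (n : ℕ) : ℝ := (m n : ℝ) / (bigN n : ℝ)
/-- `r n = 4 m L / (k² n)`. -/
def auxr (k m : ℕ → ℕ) (n : ℕ) : ℝ := 4 * (m n : ℝ) * auxL n / ((k n : ℝ) ^ 2 * (n : ℝ))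
/-- `e n = log L / (2 α L)`. -/
def auxe (α : ℝ) (n : ℕ) : ℝ := Real.log (auxL n) / (2 * α * auxL n)
/-- correction factor `c`. -/
def auxc (n : ℕ) : ℝ :=
  ((bigN n : ℝ) / ((bigN n : ℝ) - 1)) * (((bigN n : ℝ) - ((n : ℝ) - 1)) / ((bigN n : ℝ) - 1))
/-- `q = r (1-p) (1-e)`. -/
def auxq (k m : ℕ → ℕ) (α : ℝ) (n : ℕ) : ℝ :=
  auxr k m n * (1 - auxp m n) * (1 - auxe α n)
/-- `G = √(2L) (q - 1)`. -/
def auxG (k m : ℕ → ℕ) (α : ℝ) (n : ℕ) : ℝ :=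
  Real.sqrt (2 * auxL n) * (auxq k m α n - 1)
/-- `H = (√(r (1-p) c) (√q + 1))⁻¹`. -/
def auxH (k m : ℕ → ℕ) (α : ℝ) (n : ℕ) : ℝ :=
  (Real.sqrt (auxr k m n * (1 - auxp m n) * auxc n) * (Real.sqrt (auxq k m α n) + 1))⁻¹

lemma auxL_tendsto : Tendsto auxL atTop atTop :=
  Real.tendsto_log_atTop.comp tendsto_natCast_atTop_atTop

lemma auxsqrtL_tendsto : Tendsto (fun n => Real.sqrt (auxL n)) atTop atTop :=
  aux_sqrt_atTop.comp auxL_tendsto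

lemma auxinvsqrtL : Tendsto (fun n => (Real.sqrt (auxL n))⁻¹) atTop (nhds 0) :=
  tendsto_inv_atTop_zero.comp auxsqrtL_tendsto

lemma auxN_tendsto : Tendsto (fun n : ℕ => (bigN n : ℝ)) atTop atTop := by
  apply tendsto_atTop_mono' atTop (f₁ := fun n : ℕ => (n : ℝ) - 1)
  · filter_upwards [eventually_ge_atTop 2] with n hn
    rw [bigN_cast]
    have h : (2:ℝ) ≤ n := by exact_mod_cast hn
    nlinarith
  · exact tendsto_atTop_add_const_right _ (-1) tendsto_natCast_atTop_atTop

lemma auxc_tendsto : Tendsto auxc atTop (nhds 1) := by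
  have hNd : Tendsto (fun n : ℕ => (bigN n : ℝ) / ((bigN n : ℝ) - 1)) atTop (nhds 1) :=
    aux_div_sub_one.comp auxN_tendsto
  have h2n : Tendsto (fun n : ℕ => 1 - 2 / (n : ℝ)) atTop (nhds (1 - 0)) :=
    tendsto_const_nhds.sub (tendsto_const_nhds.div_atTop tendsto_natCast_atTop_atTop)
  have h := (hNd.mul hNd).mul h2n
  norm_num at h
  refine h.congr' ?_
  filter_upwards [eventually_ge_atTop 3] with n hn
  have hn3 : (3:ℝ) ≤ (n : ℝ) := by exact_mod_cast hn
  unfold auxc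
  rw [bigN_cast]
  have h1 : (n : ℝ) ≠ 0 := by linarith
  have key : (n : ℝ) * ((n : ℝ) - 1) / 2 * (1 - 2 / (n : ℝ)) =
      (n : ℝ) * ((n : ℝ) - 1) / 2 - ((n : ℝ) - 1) := by
    field_simp
  rw [show ((n : ℝ) * ((n : ℝ) - 1) / 2 - ((n : ℝ) - 1)) =
      (n : ℝ) * ((n : ℝ) - 1) / 2 * (1 - 2 / (n : ℝ)) from key.symm]
  ring
set_option maxHeartbeats 1600000 in
/-- In the critical window, the threshold `t*` satisfies
`(t* - μ - k)/σ → γ/√2`. -/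
theorem tstar_standardized_limit (k m : ℕ → ℕ) (γ α : ℝ) (hα : 1 < α)
    (hk1 : Tendsto (fun n : ℕ => (k n : ℝ) / (Real.log n) ^ 2) atTop atTop)
    (hk2 : Tendsto (fun n : ℕ => (k n : ℝ) / Real.sqrt n) atTop (nhds 0))
    (hm : Tendsto (fun n : ℕ =>
        Real.sqrt (Real.log n) *
          (4 * (m n : ℝ) * Real.log n / ((k n : ℝ) ^ 2 * (n : ℝ)) - 1)) atTop (nhds γ)) :
    Tendsto (fun n : ℕ =>
        (tstar α n (m n) - muN n (m n) - (k n : ℝ)) / sigN n (m n)) atTop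
      (nhds (γ / Real.sqrt 2)) := by
  classical
  have hL := auxL_tendsto
  have hm' : Tendsto (fun n : ℕ => Real.sqrt (auxL n) * (auxr k m n - 1)) atTop (nhds γ) := hm
  -- r → 1
  have hr1 : Tendsto (auxr k m) atTop (nhds 1) := by
    have h : Tendsto (fun n : ℕ =>
        1 + Real.sqrt (auxL n) * (auxr k m n - 1) * (Real.sqrt (auxL n))⁻¹) atTop
        (nhds (1 + γ * 0)) := tendsto_const_nhds.add (hm'.mul auxinvsqrtL)
    rw [mul_zero, add_zero] at h
    refine h.congr' ?_
    filter_upwards [hL.eventually_ge_atTop 1] with n hn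
    have hs : Real.sqrt (auxL n) ≠ 0 := by
      have : (0:ℝ) < auxL n := by linarith
      positivity
    field_simp
    ring
  -- √L·p → 0
  have hsLp : Tendsto (fun n => Real.sqrt (auxL n) * auxp m n) atTop (nhds 0) := by
    have hk2sq : Tendsto (fun n : ℕ => ((k n : ℝ) / Real.sqrt n) ^ 2) atTop (nhds 0) := by
      simpa using hk2.pow 2
    have hnn1 : Tendsto (fun n : ℕ => (n : ℝ) / ((n : ℝ) - 1)) atTop (nhds 1) :=
      aux_div_sub_one.comp tendsto_natCast_atTop_atTop
    have hhalf : Tendsto (fun n => (2 * Real.sqrt (auxL n))⁻¹) atTop (nhds 0) :=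
      tendsto_inv_atTop_zero.comp (auxsqrtL_tendsto.const_mul_atTop two_pos)
    have h := ((hr1.mul hk2sq).mul hnn1).mul hhalf
    norm_num at h
    refine h.congr' ?_
    filter_upwards [eventually_ge_atTop 3, hL.eventually_ge_atTop 1,
      hk1.eventually_ge_atTop 1] with n h3 hL1 hk1'
    have hn3 : (3:ℝ) ≤ (n : ℝ) := by exact_mod_cast h3
    have hLpos : (0:ℝ) < auxL n := by linarith
    have hkr : (1:ℝ) ≤ (k n : ℝ) := by
      have hL2 : (1:ℝ) ≤ (auxL n) ^ 2 := by nlinarith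
      have h' : (auxL n) ^ 2 * 1 ≤ (k n : ℝ) := by
        rw [mul_one]
        have := (le_div_iff₀ (by positivity : (0:ℝ) < (Real.log n) ^ 2)).mp hk1'
        simpa [auxL] using this
      nlinarith
    have hsL : Real.sqrt (auxL n) * Real.sqrt (auxL n) = auxL n :=
      Real.mul_self_sqrt hLpos.le
    have hsn : Real.sqrt (n : ℝ) * Real.sqrt (n : ℝ) = (n : ℝ) :=
      Real.mul_self_sqrt (by positivity)
    unfold auxr auxp
    rw [bigN_cast]
    have h1 : (n : ℝ) ≠ 0 := by linarith
    have h2 : (n : ℝ) - 1 ≠ 0 := by nlinarith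
    have h3' : (k n : ℝ) ≠ 0 := by linarith
    have h4 : Real.sqrt (auxL n) ≠ 0 := by positivity
    have h5 : Real.sqrt (n : ℝ) ≠ 0 := by positivity
    set s := Real.sqrt (auxL n) with hsdef
    set t := Real.sqrt (n : ℝ) with htdef
    rw [← hsL, ← hsn]
    have h2' : t * t - 1 ≠ 0 := by rw [hsn]; exact h2
    field_simp
    ring
  -- p → 0
  have hp0 : Tendsto (auxp m) atTop (nhds 0) := by
    have h := hsLp.mul auxinvsqrtL
    rw [mul_zero] at h
    refine h.congr' ?_
    filter_upwards [hL.eventually_ge_atTop 1] with n hn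
    have hs : Real.sqrt (auxL n) ≠ 0 := by
      have : (0:ℝ) < auxL n := by linarith
      positivity
    field_simp
  -- √L·e → 0
  have hsLe : Tendsto (fun n => Real.sqrt (auxL n) * auxe α n) atTop (nhds 0) := by
    have hcomp : Tendsto (fun n => Real.log (auxL n) / Real.sqrt (auxL n)) atTop (nhds 0) :=
      aux_log_div_sqrt.comp hL
    have h := hcomp.mul_const (2 * α)⁻¹
    rw [zero_mul] at h
    refine h.congr' ?_
    filter_upwards [hL.eventually_ge_atTop 1] with n hn
    have hLpos : (0:ℝ) < auxL n := by linarith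
    have hs : Real.sqrt (auxL n) ≠ 0 := by positivity
    have hα0 : α ≠ 0 := by linarith
    have hsL : Real.sqrt (auxL n) * Real.sqrt (auxL n) = auxL n :=
      Real.mul_self_sqrt hLpos.le
    unfold auxe
    set s := Real.sqrt (auxL n) with hsdef
    rw [← hsL]
    field_simp
  -- e → 0
  have he0 : Tendsto (auxe α) atTop (nhds 0) := by
    have h := hsLe.mul auxinvsqrtL
    rw [mul_zero] at h
    refine h.congr' ?_
    filter_upwards [hL.eventually_ge_atTop 1] with n hn
    have hs : Real.sqrt (auxL n) ≠ 0 := by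
      have : (0:ℝ) < auxL n := by linarith
      positivity
    field_simp
  -- q → 1
  have hq1 : Tendsto (auxq k m α) atTop (nhds 1) := by
    have h := (hr1.mul ((tendsto_const_nhds (x := (1:ℝ))).sub hp0)).mul ((tendsto_const_nhds (x := (1:ℝ))).sub he0)
    norm_num at h
    exact h
  have hu1 : Tendsto (fun n => (1 - auxp m n) * (1 - auxe α n)) atTop (nhds 1) := by
    have h := ((tendsto_const_nhds (x := (1:ℝ))).sub hp0).mul ((tendsto_const_nhds (x := (1:ℝ))).sub he0)
    norm_num at h
    exact h
  -- G → √2 γ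
  have hG : Tendsto (auxG k m α) atTop (nhds (Real.sqrt 2 * γ)) := by
    have h := ((hm'.mul hu1).add
      (((hsLp.neg).sub hsLe).add (hsLp.mul he0))).const_mul (Real.sqrt 2)
    have hval : Real.sqrt 2 * (γ * 1 + (-0 - 0 + 0 * 0)) = Real.sqrt 2 * γ := by ring
    rw [hval] at h
    refine h.congr fun n => ?_
    unfold auxG auxq
    rw [Real.sqrt_mul (by norm_num : (0:ℝ) ≤ 2)]
    ring
  -- H → 1/2
  have hH : Tendsto (auxH k m α) atTop (nhds 2⁻¹) := by
    have hin : Tendsto (fun n =>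
        Real.sqrt (auxr k m n * (1 - auxp m n) * auxc n) * (Real.sqrt (auxq k m α n) + 1))
        atTop (nhds 2) := by
      have h := (((hr1.mul ((tendsto_const_nhds (x := (1:ℝ))).sub hp0)).mul auxc_tendsto).sqrt).mul
        ((hq1.sqrt).add (tendsto_const_nhds (x := (1:ℝ))))
      norm_num [Real.sqrt_one] at h
      exact h
    exact hin.inv₀ two_ne_zero
  -- assemble
  have hfin := hG.mul hH
  have hval : Real.sqrt 2 * γ * 2⁻¹ = γ / Real.sqrt 2 := by
    have h2 : Real.sqrt 2 * Real.sqrt 2 = 2 := Real.mul_self_sqrt (by norm_num)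
    rw [eq_div_iff (by positivity : Real.sqrt 2 ≠ 0)]
    linear_combination (γ * 2⁻¹) * h2
  rw [hval] at hfin
  refine hfin.congr' ?_
  filter_upwards [eventually_ge_atTop 3, hL.eventually_ge_atTop 1,
    hk1.eventually_ge_atTop 1,
    hr1.eventually (lt_mem_nhds (by norm_num : (1:ℝ)/2 < 1)),
    hp0.eventually (gt_mem_nhds (by norm_num : (0:ℝ) < 1/2)),
    he0.eventually (gt_mem_nhds (by norm_num : (0:ℝ) < 1/2))]
    with n h3 hL1 hk1' hr' hp' he'
  -- pointwise facts
  have hn3 : (3:ℝ) ≤ (n : ℝ) := by exact_mod_cast h3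
  have hLpos : (0:ℝ) < auxL n := by linarith
  have hα0 : (0:ℝ) < α := by linarith
  have hkr : (1:ℝ) ≤ (k n : ℝ) := by
    have hL2 : (1:ℝ) ≤ (auxL n) ^ 2 := by nlinarith
    have h' : (auxL n) ^ 2 * 1 ≤ (k n : ℝ) := by
      rw [mul_one]
      have := (le_div_iff₀ (by positivity : (0:ℝ) < (Real.log n) ^ 2)).mp hk1'
      simpa [auxL] using this
    nlinarith
  have hNc := bigN_cast n
  have hNpos : (0:ℝ) < (bigN n : ℝ) := by rw [hNc]; nlinarith
  have hN3 : (3:ℝ) ≤ (bigN n : ℝ) := by rw [hNc]; nlinarith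
  have hmpos : (0:ℝ) < (m n : ℝ) := by
    by_contra hcon
    push_neg at hcon
    have hm0 : (m n : ℝ) = 0 := le_antisymm hcon (Nat.cast_nonneg _)
    have : auxr k m n = 0 := by simp [auxr, hm0]
    linarith
  have hppos : (0:ℝ) < auxp m n := div_pos hmpos hNpos
  have hrpos : (0:ℝ) < auxr k m n := by linarith
  have h1p : (0:ℝ) < 1 - auxp m n := by linarith
  have h1e : (0:ℝ) < 1 - auxe α n := by linarith
  have hqpos : (0:ℝ) < auxq k m α n := mul_pos (mul_pos hrpos h1p) h1e
  have hcpos : (0:ℝ) < auxc n := by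
    unfold auxc
    rw [hNc]
    have ha : (0:ℝ) < (n : ℝ) * ((n : ℝ) - 1) / 2 - 1 := by nlinarith
    have hb : (0:ℝ) < (n : ℝ) * ((n : ℝ) - 1) / 2 - ((n : ℝ) - 1) := by nlinarith
    have hc : (0:ℝ) < (n : ℝ) * ((n : ℝ) - 1) / 2 := by nlinarith
    exact mul_pos (div_pos hc ha) (div_pos hb ha)
  have hXpos : (0:ℝ) < auxr k m n * (1 - auxp m n) * auxc n :=
    mul_pos (mul_pos hrpos h1p) hcpos
  have hn0 : (n : ℝ) ≠ 0 := by linarith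
  have hn1 : (n : ℝ) - 1 ≠ 0 := by nlinarith
  have hk0 : (k n : ℝ) ≠ 0 := by linarith
  have hL0 : auxL n ≠ 0 := hLpos.ne'
  have hα0' : α ≠ 0 := hα0.ne'
  have hN1 : (bigN n : ℝ) - 1 ≠ 0 := by nlinarith
  -- μ = 2m/n
  have hmu : muN n (m n) = 2 * (m n : ℝ) / (n : ℝ) := by
    unfold muN
    rw [hNc]
    field_simp
  -- σ² = k² X / (2L)
  have key2 : ((n : ℝ) - 1) * ((m n : ℝ) / (bigN n : ℝ)) =
      (k n : ℝ) ^ 2 * auxr k m n / (2 * auxL n) := by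
    unfold auxr
    rw [hNc]
    field_simp
    ring
  have hsigSq : sigSqN n (m n) =
      (k n : ℝ) ^ 2 * (auxr k m n * (1 - auxp m n) * auxc n) / (2 * auxL n) := by
    have expand : sigSqN n (m n) =
        (((n : ℝ) - 1) * ((m n : ℝ) / (bigN n : ℝ))) * ((1 - auxp m n) * auxc n) := by
      unfold sigSqN auxp auxc
      ring
    rw [expand, key2]
    field_simp
  -- σ = k √X / √(2L)
  have hsigN : sigN n (m n) =
      (k n : ℝ) * Real.sqrt (auxr k m n * (1 - auxp m n) * auxc n) /
        Real.sqrt (2 * auxL n) := by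
    unfold sigN
    rw [hsigSq, show (k n : ℝ) ^ 2 * (auxr k m n * (1 - auxp m n) * auxc n) / (2 * auxL n)
        = (k n : ℝ) ^ 2 * ((auxr k m n * (1 - auxp m n) * auxc n) / (2 * auxL n)) by ring,
      Real.sqrt_mul (sq_nonneg _), Real.sqrt_sq (by linarith : (0:ℝ) ≤ (k n : ℝ)),
      Real.sqrt_div hXpos.le]
    ring
  -- t* - μ - k = k √q - k
  have hts : tstar α n (m n) - muN n (m n) - (k n : ℝ) =
      (k n : ℝ) * Real.sqrt (auxq k m α n) - (k n : ℝ) := by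
    have hne : (2 * α * auxL n) ≠ 0 := by
      have : (0:ℝ) < 2 * α * auxL n := by positivity
      exact this.ne'
    have step : 2 * auxL n * auxe α n = 1 / α * Real.log (auxL n) := by
      unfold auxe
      rw [one_div, inv_mul_eq_div, ← mul_div_assoc, div_eq_div_iff hne hα0']
      ring
    have hLam : 2 * Real.log (n : ℝ) - 1 / α * Real.log (Real.log (n : ℝ)) =
        2 * auxL n * (1 - auxe α n) := by
      show 2 * auxL n - 1 / α * Real.log (auxL n) = 2 * auxL n * (1 - auxe α n)
      linear_combination step
    have hfr : 2 * (m n : ℝ) / (n : ℝ) = (k n : ℝ) ^ 2 * auxr k m n / (2 * auxL n) := by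
      unfold auxr
      field_simp
      ring
    have harg : 2 * (m n : ℝ) / (n : ℝ) * (1 - (m n : ℝ) / (bigN n : ℝ)) *
        (2 * Real.log n - 1 / α * Real.log (Real.log n)) =
        (k n : ℝ) ^ 2 * auxq k m α n := by
      rw [hLam, hfr]
      unfold auxq auxp
      field_simp
    unfold tstar
    rw [hmu, ← Real.sqrt_mul (by positivity : (0:ℝ) ≤ 2 * (m n : ℝ) / (n : ℝ) *
      (1 - (m n : ℝ) / (bigN n : ℝ))), harg,
      Real.sqrt_mul (sq_nonneg _), Real.sqrt_sq (by linarith : (0:ℝ) ≤ (k n : ℝ))]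
    ring
  -- final algebra
  rw [hts, hsigN]
  unfold auxG auxH
  have hsq : Real.sqrt (auxq k m α n) * Real.sqrt (auxq k m α n) = auxq k m α n :=
    Real.mul_self_sqrt hqpos.le
  have hX' : (0:ℝ) < Real.sqrt (auxr k m n * (1 - auxp m n) * auxc n) :=
    Real.sqrt_pos.mpr hXpos
  have h2L' : (0:ℝ) < Real.sqrt (2 * auxL n) := Real.sqrt_pos.mpr (by linarith)
  have hq1' : (0:ℝ) < Real.sqrt (auxq k m α n) + 1 := by positivity
  have hsq2 : Real.sqrt (auxq k m α n) ^ 2 = auxq k m α n := Real.sq_sqrt hqpos.le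
  field_simp
  ring_nf
  rw [hsq2]
end
end

section
/- For all natural numbers N, K, m with 0 ≤ K ≤ N and 0 ≤ m ≤ N, every complex root of the polynomial g(z) = Σ_{d=0}^{m} C(K,d)·C(N−K,m−d)·z^d (the probability generating function of the Hypergeometric(N,K,m) distribution multiplied by C(N,m)) is real; that is, the probability generating function of a hypergeometric distribution is a real-rooted polynomial. -/
open Filter Finset MeasureTheory

noncomputable section

-- Lemma A: real-rootedness propagates through iterated derivatives
lemma rr_iterate (p : Polynomial ℝ) (hp : p ≠ 0)
    (h : Multiset.card p.roots = p.natDegree) :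
    ∀ k, k ≤ p.natDegree →
      (Polynomial.derivative^[k] p ≠ 0 ∧
        Multiset.card (Polynomial.derivative^[k] p).roots
          = (Polynomial.derivative^[k] p).natDegree ∧
        (Polynomial.derivative^[k] p).natDegree = p.natDegree - k) := by
  intro k
  induction k with
  | zero => intro _; exact ⟨hp, by simpa using h, by simp⟩
  | succ k ih =>
    intro hk
    obtain ⟨h0, h1, h2⟩ := ih (Nat.le_of_succ_le hk)
    set q := Polynomial.derivative^[k] p with hq
    have hdeg1 : 1 ≤ q.natDegree := by omega
    have hd0 : Polynomial.derivative q ≠ 0 := by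
      intro hcon
      have := Polynomial.natDegree_eq_zero_of_derivative_eq_zero hcon
      omega
    have hle : Multiset.card q.roots ≤ Multiset.card (Polynomial.derivative q).roots + 1 :=
      Polynomial.card_roots_le_derivative q
    have hle2 : Multiset.card (Polynomial.derivative q).roots
        ≤ (Polynomial.derivative q).natDegree := Polynomial.card_roots' _
    have hle3 : (Polynomial.derivative q).natDegree ≤ q.natDegree - 1 :=
      Polynomial.natDegree_derivative_le q
    rw [Function.iterate_succ_apply', ← hq]
    refine ⟨hd0, by omega, by omega⟩

-- Coefficient identity
lemma coeff_ident (K M m k : ℕ) (hm : m ≤ K + M) (hkK : k ≤ K)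
    (hkj : k ≤ K + M - m) (hjkM : K + M - m ≤ k + M) :
    (K + M - m).choose k * M.descFactorial (K + M - m - k) * K.descFactorial k
      = (K + M - m).factorial * (K.choose (K - k) * M.choose (m - (K - k))) := by
  set j := K + M - m with hj
  have h1 : j - k = M - (m - (K - k)) := by omega
  have h2 : m - (K - k) ≤ M := by omega
  have h3 : K.choose (K - k) = K.choose k := by
    have := Nat.choose_symm hkK
    simpa using this
  have h4 : M.choose (j - k) = M.choose (m - (K - k)) := by
    rw [h1, Nat.choose_symm h2]
  rw [Nat.descFactorial_eq_factorial_mul_choose, Nat.descFactorial_eq_factorial_mul_choose,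
    h3, ← h4]
  have h5 : j.choose k * k.factorial * (j - k).factorial = j.factorial :=
    Nat.choose_mul_factorial_mul_factorial hkj
  calc j.choose k * ((j - k).factorial * M.choose (j - k)) * (k.factorial * K.choose k)
      = (j.choose k * k.factorial * (j - k).factorial) * (K.choose k * M.choose (j - k)) := by
        ring
    _ = j.factorial * (K.choose k * M.choose (j - k)) := by rw [h5]

-- Lemma 3 : evaluation identity
lemma eval_iter_deriv (K M m : ℕ) (hm : m ≤ K + M) (w z : ℂ) (hwz : w + 1 = w * z) :
    Polynomial.eval w (Polynomial.derivative^[K + M - m]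
        ((Polynomial.X ^ M * (Polynomial.X + Polynomial.C 1) ^ K : Polynomial ℂ)))
      = (Nat.factorial (K + M - m) : ℂ) * w ^ m *
          ∑ d ∈ Finset.range (m + 1),
            ((Nat.choose K d : ℂ) * (Nat.choose M (m - d) : ℂ)) * z ^ d := by
  classical
  set j := K + M - m with hj
  have hjm : j + m = K + M := by omega
  rw [Polynomial.iterate_derivative_mul]
  rw [Polynomial.eval_finset_sum]
  have hterm : ∀ k ∈ Finset.range (j + 1),
      Polynomial.eval w (j.choose k •
        (Polynomial.derivative^[j - k] (Polynomial.X ^ M : Polynomial ℂ) *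
          Polynomial.derivative^[k] ((Polynomial.X + Polynomial.C 1) ^ K : Polynomial ℂ)))
      = ((j.choose k * M.descFactorial (j - k) * K.descFactorial k : ℕ) : ℂ)
          * (w ^ (M - (j - k)) * (w + 1) ^ (K - k)) := by
    intro k _
    rw [Polynomial.iterate_derivative_X_pow_eq_smul, Polynomial.iterate_derivative_X_add_pow]
    simp only [smul_mul_assoc, mul_smul_comm, Polynomial.eval_smul, Polynomial.eval_mul,
      Polynomial.eval_pow, Polynomial.eval_add, Polynomial.eval_X, Polynomial.eval_C,
      Polynomial.eval_natCast, smul_eq_mul, nsmul_eq_mul]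
    push_cast
    ring
  rw [Finset.sum_congr rfl hterm]
  rw [Finset.mul_sum]
  have hrhs : ∀ d ∈ Finset.range (m + 1),
      (Nat.factorial j : ℂ) * w ^ m * (((Nat.choose K d : ℂ) * (Nat.choose M (m - d) : ℂ)) * z ^ d)
      = ((j.factorial * (K.choose d * M.choose (m - d)) : ℕ) : ℂ) * (w ^ m * z ^ d) := by
    intro d _
    push_cast
    ring
  rw [Finset.sum_congr rfl hrhs]
  -- restrict both sums to their supports
  rw [← Finset.sum_filter_of_ne (p := fun k => k ≤ K ∧ j ≤ k + M)
    (by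
      intro k hk hne
      by_contra hcon
      apply hne
      have : j.choose k * M.descFactorial (j - k) * K.descFactorial k = 0 := by
        rcases not_and_or.mp hcon with h | h
        · have : K.descFactorial k = 0 := by
            rw [Nat.descFactorial_eq_zero_iff_lt]; omega
          simp [this]
        · have : M.descFactorial (j - k) = 0 := by
            rw [Nat.descFactorial_eq_zero_iff_lt]; omega
          simp [this]
      rw [this]
      simp)]
  rw [← Finset.sum_filter_of_ne (s := Finset.range (m + 1))
    (p := fun d => d ≤ K ∧ m ≤ d + M)
    (by
      intro d hd hne
      by_contra hcon
      apply hne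
      have : j.factorial * (K.choose d * M.choose (m - d)) = 0 := by
        rcases not_and_or.mp hcon with h | h
        · have : K.choose d = 0 := Nat.choose_eq_zero_of_lt (by omega)
          simp [this]
        · have : M.choose (m - d) = 0 := Nat.choose_eq_zero_of_lt (by omega)
          simp [this]
      rw [this]
      simp)]
  refine Finset.sum_nbij' (fun k => K - k) (fun d => K - d) ?_ ?_ ?_ ?_ ?_
  · intro k hk
    simp only [Finset.mem_filter, Finset.mem_range] at hk ⊢
    omega
  · intro d hd
    simp only [Finset.mem_filter, Finset.mem_range] at hd ⊢
    omega
  · intro k hk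
    simp only [Finset.mem_filter, Finset.mem_range] at hk
    omega
  · intro d hd
    simp only [Finset.mem_filter, Finset.mem_range] at hd
    omega
  · intro k hk
    simp only [Finset.mem_filter, Finset.mem_range] at hk
    obtain ⟨hkj, hkK, hjkM⟩ := hk
    rw [coeff_ident K M m k hm hkK (by omega) hjkM]
    have he1 : M - (j - k) = m - (K - k) := by omega
    have he2 : K - k ≤ m := by omega
    have hwz' : (w + 1) ^ (K - k) = w ^ (K - k) * z ^ (K - k) := by
      rw [hwz, mul_pow]
    rw [he1, hwz']
    have : w ^ (m - (K - k)) * (w ^ (K - k) * z ^ (K - k)) = w ^ m * z ^ (K - k) := by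
      rw [← mul_assoc, ← pow_add]
      congr 2
      omega
    rw [this]

-- Lemma B: the base polynomial is real rooted
lemma base_rr (M K : ℕ) :
    ((Polynomial.X ^ M * (Polynomial.X + Polynomial.C 1) ^ K : Polynomial ℝ)) ≠ 0 ∧
    Multiset.card ((Polynomial.X ^ M * (Polynomial.X + Polynomial.C 1) ^ K :
        Polynomial ℝ)).roots
      = ((Polynomial.X ^ M * (Polynomial.X + Polynomial.C 1) ^ K : Polynomial ℝ)).natDegree ∧
    ((Polynomial.X ^ M * (Polynomial.X + Polynomial.C 1) ^ K : Polynomial ℝ)).natDegree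
      = M + K := by
  have hm1 : (Polynomial.X ^ M : Polynomial ℝ).Monic := Polynomial.monic_X_pow M
  have hm2 : ((Polynomial.X + Polynomial.C 1 : Polynomial ℝ) ^ K).Monic :=
    (Polynomial.monic_X_add_C 1).pow K
  have hmonic := hm1.mul hm2
  have hdeg : (Polynomial.X ^ M * (Polynomial.X + Polynomial.C 1) ^ K :
      Polynomial ℝ).natDegree = M + K := by
    rw [Polynomial.natDegree_mul hm1.ne_zero hm2.ne_zero, Polynomial.natDegree_pow,
      Polynomial.natDegree_pow, Polynomial.natDegree_X, Polynomial.natDegree_X_add_C]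
    ring
  refine ⟨hmonic.ne_zero, ?_, hdeg⟩
  have hsub : (Polynomial.X + Polynomial.C (1 : ℝ)) = Polynomial.X - Polynomial.C (-1 : ℝ) := by
    rw [Polynomial.C_neg, sub_neg_eq_add]
  rw [hsub]
  have hm2' : ((Polynomial.X - Polynomial.C (-1 : ℝ)) ^ K).Monic :=
    (Polynomial.monic_X_sub_C (-1)).pow K
  rw [Polynomial.roots_mul (mul_ne_zero hm1.ne_zero hm2'.ne_zero), Polynomial.roots_pow,
    Polynomial.roots_pow, Polynomial.roots_X, Polynomial.roots_X_sub_C,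
    Polynomial.natDegree_mul hm1.ne_zero hm2'.ne_zero,
    Polynomial.natDegree_pow, Polynomial.natDegree_pow, Polynomial.natDegree_X,
    Polynomial.natDegree_X_sub_C]
  simp [Multiset.card_nsmul]


/-- The probability generating function of a hypergeometric
distribution (times `C(N,m)`) is real rooted: every complex root of
`z ↦ Σ_{d=0}^m C(K,d)·C(N-K,m-d)·z^d` is real. -/
theorem hypergeometric_pgf_real_rooted (N K m : ℕ) (hK : K ≤ N) (hm : m ≤ N)
    (z : ℂ)
    (hz : ∑ d ∈ Finset.range (m + 1),
        ((Nat.choose K d : ℂ) * (Nat.choose (N - K) (m - d) : ℂ)) * z ^ d = 0) :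
    z.im = 0 := by

  by_contra him
  set M := N - K with hM
  have hKM : K + M = N := by omega
  -- z ≠ 1
  have hz1 : z ≠ 1 := by
    rintro rfl
    simp only [one_pow, mul_one] at hz
    have hnat : ((∑ d ∈ Finset.range (m + 1),
        Nat.choose K d * Nat.choose M (m - d) : ℕ) : ℂ) = 0 := by
      push_cast
      exact hz
    have h2 : ∑ d ∈ Finset.range (m + 1), Nat.choose K d * Nat.choose M (m - d) = 0 := by
      exact_mod_cast hnat
    have hmem : min m K ∈ Finset.range (m + 1) := by
      simp only [Finset.mem_range]
      omega
    have hzero := (Finset.sum_eq_zero_iff).mp h2 (min m K) hmem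
    have p1 : 0 < Nat.choose K (min m K) := Nat.choose_pos (by omega)
    have p2 : 0 < Nat.choose M (m - min m K) := Nat.choose_pos (by omega)
    have := Nat.mul_pos p1 p2
    omega
  have hzsub : z - 1 ≠ 0 := sub_ne_zero.mpr hz1
  set w : ℂ := (z - 1)⁻¹ with hw
  have hw0 : w ≠ 0 := inv_ne_zero hzsub
  have hwz : w + 1 = w * z := by
    rw [hw]
    field_simp
    ring
  have hwim : w.im ≠ 0 := by
    rw [hw, Complex.inv_im]
    simp only [Complex.sub_im, Complex.one_im, sub_zero]
    intro hcon
    rcases div_eq_zero_iff.mp hcon with h | h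
    · exact him (by linarith [neg_eq_zero.mp h])
    · exact (Complex.normSq_pos.mpr hzsub).ne' h
  obtain ⟨hp0, hpcard, hpdeg⟩ := base_rr M K
  set p : Polynomial ℝ := Polynomial.X ^ M * (Polynomial.X + Polynomial.C 1) ^ K with hpdef
  have hj : N - m ≤ p.natDegree := by omega
  obtain ⟨hq0, hqcard, hqdeg⟩ := rr_iterate p hp0 hpcard (N - m) hj
  set q := Polynomial.derivative^[N - m] p with hqdefn
  have hinj : Function.Injective (algebraMap ℝ ℂ) := (algebraMap ℝ ℂ).injective
  have hroots_eq : q.roots.map (algebraMap ℝ ℂ) = (q.map (algebraMap ℝ ℂ)).roots :=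
    Polynomial.roots_map_of_injective_of_card_eq_natDegree hinj hqcard
  have hmapne : q.map (algebraMap ℝ ℂ) ≠ 0 := by
    rw [Polynomial.map_ne_zero_iff hinj]
    exact hq0
  have hmapp : p.map (algebraMap ℝ ℂ)
      = Polynomial.X ^ M * (Polynomial.X + Polynomial.C 1) ^ K := by
    rw [hpdef]
    simp [Polynomial.map_mul, Polynomial.map_pow, Polynomial.map_add]
  have heval : Polynomial.eval w (q.map (algebraMap ℝ ℂ)) = 0 := by
    rw [hqdefn, ← Polynomial.iterate_derivative_map, hmapp]
    have hmKM : m ≤ K + M := by omega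
    have hid := eval_iter_deriv K M m hmKM w z hwz
    rw [show K + M - m = N - m from by omega] at hid
    rw [hid, hz, mul_zero]
  have hwroot : w ∈ (q.map (algebraMap ℝ ℂ)).roots := by
    rw [Polynomial.mem_roots hmapne]
    exact heval
  rw [← hroots_eq] at hwroot
  obtain ⟨x, -, hx⟩ := Multiset.mem_map.mp hwroot
  apply hwim
  rw [← hx]
  exact Complex.ofReal_im x
end
end

section
/- Let N, K, m be natural numbers with 0 < K < N, 0 < m, and m ≤ N − K. Then every complex root of the polynomial g(z) = Σ_{d=0}^{m} C(K,d)·C(N−K,m−d)·z^d (the probability generating function of Hypergeometric(N,K,m) multiplied by C(N,m)) is a strictly negative real number. -/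
open Filter Finset MeasureTheory

noncomputable section

open Polynomial

variable {R : Type*} [CommRing R]

private lemma hyp_deriv_term (a b : ℕ) :
    derivative ((X:R[X])^a * (1+X)^b)
      = a • ((X:R[X])^(a-1) * (1+X)^b) + b • ((X:R[X])^a * (1+X)^(b-1)) := by
  rw [derivative_mul, derivative_X_pow, derivative_pow]
  have h1 : derivative (1 + X : R[X]) = 1 := by simp
  rw [h1]
  simp only [nsmul_eq_mul, Polynomial.C_eq_natCast]
  ring

private lemma hyp_nat_id1 (K M m e : ℕ) (he : e ≤ m) (hM : m < M) :
    (m + 1 - e) * (K.choose e * M.choose (m + 1 - e))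
      = K.choose e * M.choose (m - e) * (M - m + e) := by
  have h1 : m + 1 - e = (m - e) + 1 := by omega
  have h2 : M - (m - e) = M - m + e := by omega
  rw [h1]
  have h3 := Nat.choose_succ_right_eq M (m - e)
  calc ((m-e)+1) * (K.choose e * M.choose ((m-e)+1))
      = K.choose e * (M.choose ((m-e)+1) * ((m-e)+1)) := by ring
    _ = K.choose e * (M.choose (m-e) * (M - (m-e))) := by rw [h3]
    _ = _ := by rw [h2]; ring

private lemma hyp_nat_id2 (K M m d : ℕ) :
    (d + 1) * (K.choose (d+1) * M.choose (m - d))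
      = K.choose d * M.choose (m - d) * (K - d) := by
  have h3 := Nat.choose_succ_right_eq K d
  calc (d+1) * (K.choose (d+1) * M.choose (m-d))
      = (K.choose (d+1) * (d+1)) * M.choose (m-d) := by ring
    _ = (K.choose d * (K-d)) * M.choose (m-d) := by rw [h3]
    _ = _ := by ring

private lemma hyp_deriv_S (K M m : ℕ) (h : m + 1 ≤ M) :
    derivative (∑ d ∈ Finset.range (m+1),
        (K.choose d * M.choose (m-d)) • ((X:R[X])^(M-m+d) * (1+X)^(K-d)))
      = (m+1) • ∑ e ∈ Finset.range (m+2),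
        (K.choose e * M.choose (m+1-e)) • ((X:R[X])^(M-(m+1)+e) * (1+X)^(K-e)) := by
  have hT : ∀ d ∈ Finset.range (m+1),
      derivative ((K.choose d * M.choose (m-d)) • ((X:R[X])^(M-m+d) * (1+X)^(K-d)))
        = (K.choose d * M.choose (m-d) * (M-m+d)) •
            ((X:R[X])^(M-(m+1)+d) * (1+X)^(K-d))
          + (K.choose d * M.choose (m-d) * (K-d)) •
            ((X:R[X])^(M-(m+1)+(d+1)) * (1+X)^(K-(d+1))) := by
    intro d hd
    have e1 : (M - m + d) - 1 = M - (m+1) + d := by omega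
    have e2 : M - m + d = M - (m+1) + (d+1) := by omega
    have e3 : (K - d) - 1 = K - (d+1) := by omega
    rw [derivative_smul, hyp_deriv_term, smul_add, smul_smul, smul_smul]
    congr 1
    · rw [e1]
    · rw [e2, e3]
  rw [derivative_sum, Finset.sum_congr rfl hT, Finset.sum_add_distrib]
  have hR : (m+1) • ∑ e ∈ Finset.range (m+2),
        (K.choose e * M.choose (m+1-e)) • ((X:R[X])^(M-(m+1)+e) * (1+X)^(K-e))
      = (∑ e ∈ Finset.range (m+2), ((m+1-e) * (K.choose e * M.choose (m+1-e))) •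
            ((X:R[X])^(M-(m+1)+e) * (1+X)^(K-e)))
        + ∑ e ∈ Finset.range (m+2), (e * (K.choose e * M.choose (m+1-e))) •
            ((X:R[X])^(M-(m+1)+e) * (1+X)^(K-e)) := by
    rw [Finset.smul_sum, ← Finset.sum_add_distrib]
    refine Finset.sum_congr rfl fun e he => ?_
    rw [smul_smul, ← add_smul, ← add_mul]
    have : m + 1 - e + e = m + 1 := by
      have := Finset.mem_range.mp he; omega
    rw [this]
  have hA : (∑ e ∈ Finset.range (m+2), ((m+1-e) * (K.choose e * M.choose (m+1-e))) •
        ((X:R[X])^(M-(m+1)+e) * (1+X)^(K-e)))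
      = ∑ d ∈ Finset.range (m+1), (K.choose d * M.choose (m-d) * (M-m+d)) •
        ((X:R[X])^(M-(m+1)+d) * (1+X)^(K-d)) := by
    rw [Finset.sum_range_succ, Nat.sub_self, zero_mul, zero_smul, add_zero]
    refine Finset.sum_congr rfl fun e he => ?_
    have he' : e ≤ m := by have := Finset.mem_range.mp he; omega
    rw [hyp_nat_id1 K M m e he' (by omega)]
  have hB : (∑ e ∈ Finset.range (m+2), (e * (K.choose e * M.choose (m+1-e))) •
        ((X:R[X])^(M-(m+1)+e) * (1+X)^(K-e)))
      = ∑ d ∈ Finset.range (m+1), (K.choose d * M.choose (m-d) * (K-d)) •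
        ((X:R[X])^(M-(m+1)+(d+1)) * (1+X)^(K-(d+1))) := by
    rw [Finset.sum_range_succ', zero_mul, zero_smul, add_zero]
    refine Finset.sum_congr rfl fun d hd => ?_
    have h4 : m + 1 - (d + 1) = m - d := by omega
    rw [h4, hyp_nat_id2 K M m d]
  rw [hR, hA, hB]

private lemma hyp_iterate_deriv (K M m : ℕ) (hm : m ≤ M) :
    derivative^[m] ((X:R[X])^M * (1+X)^K)
      = m.factorial • ∑ d ∈ Finset.range (m+1),
          (K.choose d * M.choose (m-d)) • ((X:R[X])^(M-m+d) * (1+X)^(K-d)) := by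
  induction m with
  | zero => simp
  | succ n ih =>
    rw [Function.iterate_succ_apply', ih (by omega), derivative_smul,
      hyp_deriv_S K M n hm, smul_smul, Nat.factorial_succ, Nat.mul_comm]

private lemma hyp_eval (K M m : ℕ) (hm : m ≤ M) (x : R) :
    Polynomial.eval x (derivative^[m] ((X:R[X])^M * (1+X)^K))
      = (m.factorial : R) * ∑ d ∈ Finset.range (m+1),
          (K.choose d : R) * (M.choose (m-d) : R) * x^(M-m+d) * (1+x)^(K-d) := by
  rw [hyp_iterate_deriv K M m hm]
  simp only [nsmul_eq_mul, eval_mul, eval_natCast, eval_finset_sum, eval_pow, eval_add,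
    eval_one, eval_X]
  rw [Finset.mul_sum, Finset.mul_sum]
  refine Finset.sum_congr rfl fun d _ => ?_
  push_cast
  ring

private lemma hyp_eval_pos (K M m : ℕ) (hm : m ≤ M) (x : ℝ) (hx : 0 < x) :
    0 < Polynomial.eval x (derivative^[m] ((X:ℝ[X])^M * (1+X)^K)) := by
  rw [hyp_eval K M m hm]
  have hfac : (0:ℝ) < (m.factorial : ℝ) := by positivity
  refine mul_pos hfac ?_
  refine Finset.sum_pos' (fun d _ => by positivity) ⟨0, Finset.mem_range.mpr (Nat.succ_pos m), ?_⟩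
  have hxp : (0:ℝ) < 1 + x := by linarith
  have hch : (0:ℝ) < (M.choose m : ℝ) := by exact_mod_cast Nat.choose_pos hm
  have hterm : ((K.choose 0 : ℝ) * (M.choose (m-0) : ℝ) * x^(M-m+0) * (1+x)^(K-0))
      = (M.choose m : ℝ) * (x^(M-m) * (1+x)^K) := by simp; ring
  rw [hterm]
  exact mul_pos hch (mul_pos (pow_pos hx _) (pow_pos hxp _))

private lemma hyp_eval_neg_ne (K M m : ℕ) (hm : m ≤ M) (x : ℝ) (hx : x < -1) :
    Polynomial.eval x (derivative^[m] ((X:ℝ[X])^M * (1+X)^K)) ≠ 0 := by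
  rw [hyp_eval K M m hm]
  have key : ∀ d ∈ Finset.range (m+1),
      (K.choose d : ℝ) * (M.choose (m-d) : ℝ) * x^(M-m+d) * (1+x)^(K-d)
        = (-1:ℝ)^(M+K-m) *
            ((K.choose d : ℝ) * (M.choose (m-d) : ℝ) * (-x)^(M-m+d) * (-(1+x))^(K-d)) := by
    intro d hd
    by_cases hdK : d ≤ K
    · have hs : (M-m+d) + ((K-d) + (M+K-m)) = 2*(M+K-m) := by omega
      have h1 : (-x)^(M-m+d) = (-1:ℝ)^(M-m+d) * x^(M-m+d) := neg_pow x _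
      have h2 : (-(1+x))^(K-d) = (-1:ℝ)^(K-d) * (1+x)^(K-d) := neg_pow _ _
      rw [h1, h2]
      have h3 : (-1:ℝ)^(M-m+d) * ((-1:ℝ)^(K-d) * (-1:ℝ)^(M+K-m)) = 1 := by
        rw [← pow_add, ← pow_add, hs, pow_mul]
        norm_num
      calc (K.choose d : ℝ) * (M.choose (m-d) : ℝ) * x^(M-m+d) * (1+x)^(K-d)
          = ((-1:ℝ)^(M-m+d) * ((-1:ℝ)^(K-d) * (-1:ℝ)^(M+K-m))) *
              ((K.choose d : ℝ) * (M.choose (m-d) : ℝ) * x^(M-m+d) * (1+x)^(K-d)) := by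
            rw [h3, one_mul]
        _ = (-1:ℝ)^(M+K-m) * ((K.choose d : ℝ) * (M.choose (m-d) : ℝ) *
              ((-1:ℝ)^(M-m+d) * x^(M-m+d)) * ((-1:ℝ)^(K-d) * (1+x)^(K-d))) := by
            ring
    · have hc : K.choose d = 0 := Nat.choose_eq_zero_of_lt (by omega)
      simp [hc]
  rw [Finset.sum_congr rfl key, ← Finset.mul_sum]
  have hx1 : (0:ℝ) < -x := by linarith
  have hx2 : (0:ℝ) < -(1+x) := by linarith
  have hsum : 0 < ∑ d ∈ Finset.range (m+1),
      (K.choose d : ℝ) * (M.choose (m-d) : ℝ) * (-x)^(M-m+d) * (-(1+x))^(K-d) := by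
    refine Finset.sum_pos' (fun d _ => by positivity)
      ⟨0, Finset.mem_range.mpr (Nat.succ_pos m), ?_⟩
    have hch : (0:ℝ) < (M.choose m : ℝ) := by exact_mod_cast Nat.choose_pos hm
    have hterm : ((K.choose 0 : ℝ) * (M.choose (m-0) : ℝ) * (-x)^(M-m+0) * (-(1+x))^(K-0))
        = (M.choose m : ℝ) * ((-x)^(M-m) * (-(1+x))^K) := by simp; ring
    rw [hterm]
    exact mul_pos hch (mul_pos (pow_pos hx1 _) (pow_pos hx2 _))
  have hfac : (0:ℝ) < (m.factorial : ℝ) := by positivity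
  have hsgn : (-1:ℝ)^(M+K-m) ≠ 0 := by
    intro h; simpa using congrArg (|·|) h
  exact mul_ne_zero (ne_of_gt hfac) (mul_ne_zero hsgn (ne_of_gt hsum))

private lemma hyp_base_ne (K M : ℕ) : ((X:ℝ[X])^M * (1+X)^K) ≠ (0:ℝ[X]) := by
  refine mul_ne_zero (pow_ne_zero _ X_ne_zero) (pow_ne_zero _ ?_)
  rw [add_comm, ← C_1]
  exact X_add_C_ne_zero 1

private lemma hyp_roots_base (K M : ℕ) :
    Multiset.card ((X:ℝ[X])^M * (1+X)^K).roots = M + K := by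
  rw [roots_mul (hyp_base_ne K M), roots_pow, roots_pow, roots_X]
  have : ((1:ℝ[X]) + X).roots = {-1} := by
    have h : (1:ℝ[X]) + X = X - C (-1) := by
      rw [map_neg, C_1, sub_neg_eq_add, add_comm]
    rw [h, roots_X_sub_C]
  rw [this]
  simp

private lemma hyp_natDegree_base (K M : ℕ) :
    ((X:ℝ[X])^M * (1+X)^K).natDegree = M + K := by
  rw [natDegree_mul (pow_ne_zero _ X_ne_zero)
      (pow_ne_zero _ (by rw [add_comm, ← C_1]; exact X_add_C_ne_zero 1)),
    natDegree_pow, natDegree_pow, natDegree_X]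
  have : ((1:ℝ[X]) + X).natDegree = 1 := by
    rw [add_comm, ← C_1, natDegree_X_add_C]
  rw [this]
  ring

private lemma hyp_card_ge (K M : ℕ) : ∀ j,
    (M + K) - j ≤ Multiset.card (derivative^[j] ((X:ℝ[X])^M * (1+X)^K)).roots := by
  intro j
  induction j with
  | zero => simp [hyp_roots_base K M]
  | succ n ih =>
    rw [Function.iterate_succ_apply']
    have := Polynomial.card_roots_le_derivative (derivative^[n] ((X:ℝ[X])^M * (1+X)^K))
    omega

private lemma hyp_card_eq (K M m : ℕ) :
    Multiset.card (derivative^[m] ((X:ℝ[X])^M * (1+X)^K)).roots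
      = (derivative^[m] ((X:ℝ[X])^M * (1+X)^K)).natDegree := by
  have h1 := hyp_card_ge K M m
  have h2 : (derivative^[m] ((X:ℝ[X])^M * (1+X)^K)).natDegree ≤ (M + K) - m := by
    have h := Polynomial.natDegree_iterate_derivative ((X:ℝ[X])^M * (1+X)^K) m
    rwa [hyp_natDegree_base K M] at h
  have h3 := Polynomial.card_roots' (derivative^[m] ((X:ℝ[X])^M * (1+X)^K))
  omega

private lemma hyp_map (K M m : ℕ) :
    (derivative^[m] ((X:ℝ[X])^M * (1+X)^K)).map (algebraMap ℝ ℂ)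
      = derivative^[m] ((X:ℂ[X])^M * (1+X)^K) := by
  have key : ∀ (p : ℝ[X]),
      (derivative^[m] p).map (algebraMap ℝ ℂ) = derivative^[m] (p.map (algebraMap ℝ ℂ)) := by
    induction m with
    | zero => intro p; simp
    | succ n ih =>
      intro p
      rw [Function.iterate_succ_apply', Function.iterate_succ_apply', ← ih, derivative_map]
  rw [key]
  simp [Polynomial.map_mul, Polynomial.map_pow, Polynomial.map_add]

private lemma hyp_complex_root (K M m : ℕ) (hm : m ≤ M) (x : ℂ)
    (hx : Polynomial.eval x (derivative^[m] ((X:ℂ[X])^M * (1+X)^K)) = 0) :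
    ∃ r : ℝ, -1 ≤ r ∧ r ≤ 0 ∧ x = (r:ℂ) := by
  set P := derivative^[m] ((X:ℝ[X])^M * (1+X)^K) with hP
  have hPne : P ≠ 0 := by
    intro h
    have := hyp_eval_pos K M m hm 1 one_pos
    rw [← hP, h] at this
    simp at this
  have hroots := Polynomial.roots_map_of_injective_of_card_eq_natDegree
    (f := algebraMap ℝ ℂ) (p := P) (algebraMap ℝ ℂ).injective (hyp_card_eq K M m)
  have hmapne : P.map (algebraMap ℝ ℂ) ≠ 0 :=
    (Polynomial.map_ne_zero_iff (algebraMap ℝ ℂ).injective).mpr hPne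
  have hmem : x ∈ (P.map (algebraMap ℝ ℂ)).roots := by
    rw [mem_roots hmapne]
    show Polynomial.eval x (P.map (algebraMap ℝ ℂ)) = 0
    rw [hP, hyp_map K M m]
    exact hx
  rw [← hroots] at hmem
  obtain ⟨r, hr, hrx⟩ := Multiset.mem_map.mp hmem
  have hr0 : Polynomial.eval r P = 0 := (mem_roots hPne).mp hr
  refine ⟨r, ?_, ?_, hrx.symm⟩
  · by_contra h
    exact hyp_eval_neg_ne K M m hm r (by linarith) hr0
  · by_contra h
    exact (ne_of_gt (hyp_eval_pos K M m hm r (by linarith))) hr0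


/-- For `0 < K < N`, `0 < m ≤ N - K`, every complex root of the
hypergeometric probability generating function (times `C(N,m)`) is a strictly
negative real number. -/
theorem hypergeometric_pgf_neg_roots (N K m : ℕ) (hK0 : 0 < K) (hKN : K < N)
    (hm0 : 0 < m) (hm : m ≤ N - K) (z : ℂ)
    (hz : ∑ d ∈ Finset.range (m + 1),
        ((Nat.choose K d : ℂ) * (Nat.choose (N - K) (m - d) : ℂ)) * z ^ d = 0) :
    z.im = 0 ∧ z.re < 0 := by
  set M := N - K with hM
  have hz0 : z ≠ 0 := by
    intro h
    rw [h] at hz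
    have hsum : ∑ d ∈ Finset.range (m+1),
        ((Nat.choose K d : ℂ) * (Nat.choose M (m-d) : ℂ)) * (0:ℂ)^d
          = (Nat.choose M m : ℂ) := by
      rw [Finset.sum_eq_single 0]
      · simp
      · intro b _ hb; simp [zero_pow hb]
      · intro h0; exact absurd (Finset.mem_range.mpr (Nat.succ_pos m)) h0
    rw [hsum] at hz
    exact Nat.cast_ne_zero.mpr (Nat.choose_pos hm).ne' hz
  have hz1 : z ≠ 1 := by
    intro h
    rw [h] at hz
    simp only [one_pow, mul_one] at hz
    have h1 : ((∑ d ∈ Finset.range (m+1), K.choose d * M.choose (m-d) : ℕ) : ℂ) = 0 := by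
      push_cast
      exact hz
    have h2 : (∑ d ∈ Finset.range (m+1), K.choose d * M.choose (m-d)) = 0 :=
      Nat.cast_eq_zero.mp h1
    have h3 : K.choose 0 * M.choose (m-0) ≤
        ∑ d ∈ Finset.range (m+1), K.choose d * M.choose (m-d) :=
      Finset.single_le_sum (f := fun d => K.choose d * M.choose (m-d))
        (fun d _ => Nat.zero_le _) (Finset.mem_range.mpr (Nat.succ_pos m))
    have h4 : 0 < M.choose m := Nat.choose_pos hm
    simp only [Nat.choose_zero_right, one_mul, Nat.sub_zero] at h3
    omega
  have h1z : (1:ℂ) - z ≠ 0 := fun h => hz1 (sub_eq_zero.mp h).symm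
  set x : ℂ := z / (1 - z) with hxdef
  clear_value x
  have hx1 : (1 + x) * (1 - z) = 1 := by
    rw [hxdef]; field_simp; ring
  have hxz : x * (1 - z) = z := by
    rw [hxdef]; field_simp
  have hkey : Polynomial.eval x (Polynomial.derivative^[m] ((X:ℂ[X])^M * (1+X)^K))
        * (1-z)^(M+K-m)
      = (m.factorial : ℂ) * (∑ d ∈ Finset.range (m+1),
          ((K.choose d : ℂ) * (M.choose (m-d) : ℂ)) * (z^(M-m) * z^d)) := by
    rw [hyp_eval K M m hm x, mul_assoc, Finset.sum_mul]
    congr 1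
    refine Finset.sum_congr rfl fun d hd => ?_
    have hdm : d ≤ m := by have := Finset.mem_range.mp hd; omega
    by_cases hdK : d ≤ K
    · have sA : M+K-m = (M-m+d) + (K-d) := by omega
      have e1 : (x*(1-z))^(M-m+d) = z^(M-m+d) := by rw [hxz]
      have e2 : ((1+x)*(1-z))^(K-d) = 1 := by rw [hx1, one_pow]
      calc (K.choose d : ℂ) * (M.choose (m-d) : ℂ) * x^(M-m+d) * (1+x)^(K-d) * (1-z)^(M+K-m)
          = (K.choose d : ℂ) * (M.choose (m-d) : ℂ) * ((x*(1-z))^(M-m+d) *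
              ((1+x)*(1-z))^(K-d)) := by
            rw [sA, pow_add, mul_pow, mul_pow]; ring
        _ = (K.choose d : ℂ) * (M.choose (m-d) : ℂ) * z^(M-m+d) := by
            rw [e1, e2, mul_one]
        _ = (K.choose d : ℂ) * (M.choose (m-d) : ℂ) * (z^(M-m) * z^d) := by
            rw [← pow_add]
    · have hc : K.choose d = 0 := Nat.choose_eq_zero_of_lt (by omega)
      simp [hc]
  have hsplit : ∑ d ∈ Finset.range (m+1),
        ((K.choose d : ℂ) * (M.choose (m-d) : ℂ)) * (z^(M-m) * z^d)
      = z^(M-m) * ∑ d ∈ Finset.range (m+1),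
        ((K.choose d : ℂ) * (M.choose (m-d) : ℂ)) * z^d := by
    rw [Finset.mul_sum]
    exact Finset.sum_congr rfl fun d _ => by ring
  rw [hsplit, hz, mul_zero, mul_zero] at hkey
  have hevalx : Polynomial.eval x (Polynomial.derivative^[m] ((X:ℂ[X])^M * (1+X)^K)) = 0 :=
    (mul_eq_zero.mp hkey).resolve_right (pow_ne_zero _ h1z)
  obtain ⟨r, hr1, hr0, hxr⟩ := hyp_complex_root K M m hm x hevalx
  have hrne1 : r ≠ -1 := by
    intro h
    rw [hxr, h] at hx1
    norm_num at hx1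
  have hrne0 : r ≠ 0 := by
    intro h
    rw [hxr, h] at hxz
    simp at hxz
    exact hz0 hxz.symm
  have h1x : (1:ℂ) + x ≠ 0 := fun h => by
    rw [h, zero_mul] at hx1; exact one_ne_zero hx1.symm
  have hz_eq : z * (1 + x) = x := by linear_combination -hxz
  have hz_real : z = ((r / (1+r) : ℝ) : ℂ) := by
    have : z = x / (1 + x) := (eq_div_iff h1x).mpr hz_eq
    rw [this, hxr]
    push_cast
    ring
  have hr1' : (0:ℝ) < 1 + r := by
    have : -1 < r := lt_of_le_of_ne hr1 (Ne.symm hrne1)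
    linarith
  have hr0' : r < 0 := lt_of_le_of_ne hr0 hrne0
  constructor
  · rw [hz_real]; exact Complex.ofReal_im _
  · rw [hz_real, Complex.ofReal_re]
    exact div_neg_of_neg_of_pos hr0' hr1'
end
end
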